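/- Let κ be a regular cardinal greater than the cardinality of the morphism set of a small category C. A morphism f : P → Q in Psh(C) is relatively κ-compact if and only if for every object c of C and every morphism y(c) → Q from the representable presheaf, the pullback y(c) ×_Q P is κ-compact. -/

import Mathlib

open CategoryTheory CategoryTheory.Limits

universe v u u'

/-- A category `J` is `κ`-filtered if every diagram in `J` indexed by a category
with fewer than `κ` morphisms admits a cocone. -/
def IsCardFiltered (κ : Cardinal.{v}) (J : Type v) [SmallCategory J] : Prop :=
  ∀ (K : Type v) [SmallCategory K], Cardinal.mk (Σ a b : K, a ⟶ b) < κ →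
    ∀ F : K ⥤ J, Nonempty (Cocone F)

/-- An object `X` is `κ`-compact if `Hom(X, −)` preserves `κ`-filtered colimits. -/
def IsKappaCompact (κ : Cardinal.{v}) {E : Type u} [Category.{v} E] (X : E) : Prop :=
  ∀ (J : Type v) [SmallCategory J], IsCardFiltered κ J →
    ∀ (F : J ⥤ E) (c : Cocone F), Nonempty (IsColimit c) →
      Nonempty (IsColimit ((coyoneda.obj (Opposite.op X)).mapCocone c))

/-- A morphism is relatively `κ`-compact if its pullback along any map from a
`κ`-compact object is `κ`-compact. -/
def RelKappaCompact (κ : Cardinal.{v}) {E : Type u} [Category.{v} E] {X Y : E}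
    (f : X ⟶ Y) : Prop :=
  ∀ (Z : E) (g : Z ⟶ Y), IsKappaCompact κ Z →
    ∀ (P : E) (fst : P ⟶ X) (snd : P ⟶ Z), IsPullback fst snd f g →
      IsKappaCompact κ P


namespace KappaAux

open Cardinal Opposite

lemma mk_obj_le_mk_hom (K : Type v) [SmallCategory K] :
    Cardinal.mk K ≤ #(Σ a b : K, a ⟶ b) :=
  mk_le_of_injective (f := fun k => ⟨k, k, 𝟙 k⟩)
    (fun a b h => congrArg Sigma.fst h)

lemma mk_sigma_hom_lt (K : Type v) [SmallCategory K]
    [∀ a b : K, Subsingleton (a ⟶ b)] {κ : Cardinal.{v}} (hκ : κ.IsRegular)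
    (hK : #K < κ) : #(Σ a b : K, a ⟶ b) < κ := by
  have h : #(Σ a b : K, a ⟶ b) ≤ #(K × K) := by
    apply mk_le_of_injective (f := fun x => (x.1, x.2.1))
    rintro ⟨a, b, f⟩ ⟨a', b', f'⟩ h
    simp only [Prod.mk.injEq] at h
    obtain ⟨rfl, rfl⟩ := h
    rw [Subsingleton.elim f f']
  refine h.trans_lt ?_
  rw [mk_prod]; simp only [lift_id]
  exact Cardinal.mul_lt_of_lt hκ.aleph0_le hK hK


section Filtered

variable {κ : Cardinal.{v}} {J : Type v} [SmallCategory J]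

lemma nonempty_of_cardFiltered (hκ : κ.IsRegular) (hJ : IsCardFiltered κ J) :
    Nonempty J := by
  obtain ⟨c⟩ := hJ (Discrete PEmpty.{v + 1})
    (by rw [mk_eq_zero]; exact hκ.pos) (Functor.empty J)
  exact ⟨c.pt⟩

lemma exists_cocone_family (hκ : κ.IsRegular) (hJ : IsCardFiltered κ J)
    {T : Type v} (hT : #T < κ) (j : T → J) :
    ∃ k : J, ∀ t, Nonempty (j t ⟶ k) := by
  obtain ⟨c⟩ := hJ (Discrete T)
    (mk_sigma_hom_lt _ hκ ((mk_congr discreteEquiv).trans_lt hT)) (Discrete.functor j)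
  exact ⟨c.pt, fun t => ⟨c.ι.app ⟨t⟩⟩⟩

lemma exists_fan (hκ : κ.IsRegular) (hJ : IsCardFiltered κ J)
    {T : Type v} (hT : #T < κ) (j₀ : J) (j : T → J) (u : ∀ t, j₀ ⟶ j t) :
    ∃ (k : J) (w : j₀ ⟶ k) (vv : ∀ t, j t ⟶ k), ∀ t, u t ≫ vv t = w := by
  obtain ⟨c⟩ := hJ (WidePushoutShape T)
    (mk_sigma_hom_lt _ hκ (by
      have : #(WidePushoutShape T) = #(Option T) := rfl
      rw [this, mk_option]
      exact add_lt_of_lt hκ.aleph0_le hT (one_lt_aleph0.trans_le hκ.aleph0_le)))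
    (WidePushoutShape.wideSpan j₀ j u)
  refine ⟨c.pt, c.ι.app none, fun t => c.ι.app (some t), fun t => ?_⟩
  have := c.ι.naturality (WidePushoutShape.Hom.init t)
  simp at this
  exact this

lemma isFiltered_of_cardFiltered (hκ : κ.IsRegular) (hJ : IsCardFiltered κ J) :
    IsFiltered J := by
  have hne : Nonempty J := nonempty_of_cardFiltered hκ hJ
  have hobj : ∀ X Y : J, ∃ (Z : J), Nonempty (X ⟶ Z) ∧ Nonempty (Y ⟶ Z) := by
    intro X Y
    obtain ⟨k, hk⟩ := exists_cocone_family hκ hJ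
      (T := ULift.{v} Bool) ((lt_aleph0_of_finite _).trans_le hκ.aleph0_le)
      (fun t => if t.down then X else Y)
    exact ⟨k, by simpa using hk ⟨true⟩, by simpa using hk ⟨false⟩⟩
  have hmap : ∀ (X Y : J) (f g : X ⟶ Y), ∃ (Z : J) (h : Y ⟶ Z), f ≫ h = g ≫ h := by
    intro X Y f g
    obtain ⟨c⟩ := hJ (AsSmall.{v} WalkingParallelPair)
      (by
        refine lt_of_lt_of_le ?_ hκ.aleph0_le
        rw [mk_lt_aleph0_iff]
        have e : (Σ a b : AsSmall.{v} WalkingParallelPair, a ⟶ b) ≃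
            (Σ a b : WalkingParallelPair, a ⟶ b) :=
          ⟨fun x => ⟨ULift.down x.1, ULift.down x.2.1, ULift.down x.2.2⟩,
           fun x => ⟨ULift.up x.1, ULift.up x.2.1, ULift.up x.2.2⟩,
           fun ⟨a, b, f⟩ => rfl, fun ⟨a, b, f⟩ => rfl⟩
        exact Finite.of_equiv _ e.symm)
      (AsSmall.down ⋙ parallelPair f g)
    refine ⟨c.pt, c.ι.app (AsSmall.up.obj WalkingParallelPair.one), ?_⟩
    have h1 := c.ι.naturality (AsSmall.up.map WalkingParallelPairHom.left)
    have h2 := c.ι.naturality (AsSmall.up.map WalkingParallelPairHom.right)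
    simp only [Functor.comp_map, Functor.const_obj_obj, Functor.const_obj_map,
      Category.comp_id] at h1 h2
    exact h1.trans h2.symm
  haveI : IsFilteredOrEmpty J := by
    constructor
    · intro X Y
      obtain ⟨Z, ⟨u1⟩, ⟨u2⟩⟩ := hobj X Y
      exact ⟨Z, u1, u2, trivial⟩
    · intro X Y f g
      exact hmap X Y f g
  exact ⟨⟩

lemma eq_stage_single (hκ : κ.IsRegular) (hJ : IsCardFiltered κ J)
    {G : J ⥤ Type v} {cG : Cocone G} (hG : IsColimit cG) {j₀ : J}
    {a b : G.obj j₀} (h : cG.ι.app j₀ a = cG.ι.app j₀ b) :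
    ∃ (k : J) (u : j₀ ⟶ k), G.map u a = G.map u b := by
  haveI : IsFiltered J := isFiltered_of_cardFiltered hκ hJ
  obtain ⟨k, f, g, hfg⟩ := (Types.FilteredColimit.isColimit_eq_iff G hG).mp h
  refine ⟨IsFiltered.coeq f g, f ≫ IsFiltered.coeqHom f g, ?_⟩
  calc G.map (f ≫ IsFiltered.coeqHom f g) a
      = G.map (IsFiltered.coeqHom f g) (G.map f a) := by
        rw [G.map_comp]; rfl
    _ = G.map (IsFiltered.coeqHom f g) (G.map g b) := by rw [hfg]
    _ = G.map (g ≫ IsFiltered.coeqHom f g) b := by rw [G.map_comp]; rfl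
    _ = G.map (f ≫ IsFiltered.coeqHom f g) b := by
        rw [← IsFiltered.coeq_condition f g]

lemma eq_stage_family (hκ : κ.IsRegular) (hJ : IsCardFiltered κ J)
    {T : Type v} (hT : #T < κ) (j₀ : J)
    (G : T → (J ⥤ Type v)) (cG : ∀ t, Cocone (G t)) (hG : ∀ t, IsColimit (cG t))
    (a b : ∀ t, (G t).obj j₀)
    (h : ∀ t, (cG t).ι.app j₀ (a t) = (cG t).ι.app j₀ (b t)) :
    ∃ (k : J) (w : j₀ ⟶ k), ∀ t, (G t).map w (a t) = (G t).map w (b t) := by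
  choose k u hu using fun t => eq_stage_single hκ hJ (hG t) (h t)
  obtain ⟨m, w, vv, hv⟩ := exists_fan hκ hJ hT j₀ k u
  refine ⟨m, w, fun t => ?_⟩
  rw [← hv t, (G t).map_comp, types_comp_apply, types_comp_apply, hu t]

end Filtered

section Presheaf

open CategoryTheory.GrothendieckTopology

variable {C : Type v} [SmallCategory C] {κ : Cardinal.{v}}

lemma mk_hom_lt (hC : #(Σ X Y : C, X ⟶ Y) < κ) (a b : C) : #(a ⟶ b) < κ := by
  refine lt_of_le_of_lt ?_ hC
  apply mk_le_of_injective (f := fun φ => (⟨a, b, φ⟩ : Σ X Y : C, X ⟶ Y))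
  intro φ ψ h
  simpa using h

lemma mk_op_hom_lt (hC : #(Σ X Y : C, X ⟶ Y) < κ) (a b : Cᵒᵖ) : #(a ⟶ b) < κ := by
  have : #(a ⟶ b) = #(b.unop ⟶ a.unop) := mk_congr (Opposite.equivToOpposite).symm
  rw [this]
  exact mk_hom_lt hC _ _

/-- The subpresheaf generated by a single section. -/
def genSub (P : Cᵒᵖ ⥤ Type v) (d : Cᵒᵖ) (z : P.obj d) : Subfunctor P where
  obj c := Set.range (fun f : d ⟶ c => P.map f z)
  map := by
    rintro U V i x ⟨f, rfl⟩
    exact ⟨f ≫ i, FunctorToTypes.map_comp_apply P f i z⟩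

lemma genSub_self (P : Cᵒᵖ ⥤ Type v) (d : Cᵒᵖ) (z : P.obj d) :
    z ∈ (genSub P d z).obj d :=
  ⟨𝟙 d, FunctorToTypes.map_id_apply P z⟩

lemma genSub_small (hκ : κ.IsRegular) (hC : #(Σ X Y : C, X ⟶ Y) < κ)
    (P : Cᵒᵖ ⥤ Type v) (d : Cᵒᵖ) (z : P.obj d) (c : Cᵒᵖ) :
    #((genSub P d z).obj c) < κ :=
  lt_of_le_of_lt mk_range_le (mk_op_hom_lt hC d c)

/-- Union of a family of subpresheaves. -/
def unionSub (P : Cᵒᵖ ⥤ Type v) {ι : Type v} (S : ι → Subfunctor P) :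
    Subfunctor P where
  obj c := ⋃ i, (S i).obj c
  map := by
    intro U V i x hx
    obtain ⟨i₀, hi₀⟩ := Set.mem_iUnion.mp hx
    exact Set.mem_iUnion.mpr ⟨i₀, (S i₀).map i hi₀⟩

lemma le_unionSub (P : Cᵒᵖ ⥤ Type v) {ι : Type v} (S : ι → Subfunctor P)
    (i₀ : ι) : S i₀ ≤ unionSub P S :=
  fun c _ hx => Set.mem_iUnion.mpr ⟨i₀, hx⟩

lemma unionSub_small (hκ : κ.IsRegular) {ι : Type v} (hι : #ι < κ)
    {P : Cᵒᵖ ⥤ Type v} (S : ι → Subfunctor P) (hS : ∀ i c, #((S i).obj c) < κ)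
    (c : Cᵒᵖ) : #((unionSub P S).obj c) < κ := by
  refine lt_of_le_of_lt (mk_iUnion_le _) ?_
  exact Cardinal.mul_lt_of_lt hκ.aleph0_le hι
    (iSup_lt_of_isRegular hκ hι (fun i => hS i c))

variable (κ) in
/-- The poset of `κ`-small subpresheaves of `P`. -/
def SmallSub (P : Cᵒᵖ ⥤ Type v) : Type v :=
  {S : Subfunctor P // ∀ c, #(S.obj c) < κ}

instance (P : Cᵒᵖ ⥤ Type v) : Preorder (SmallSub κ P) :=
  Subtype.preorder _

instance (P : Cᵒᵖ ⥤ Type v) : SmallCategory (SmallSub κ P) :=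
  Preorder.smallCategory _

/-- The tautological diagram of small subpresheaves. -/
def smallSubDiag (P : Cᵒᵖ ⥤ Type v) : SmallSub κ P ⥤ (Cᵒᵖ ⥤ Type v) where
  obj S := S.1.toFunctor
  map {S T} f := Subfunctor.homOfLe (leOfHom f)
  map_id _ := rfl
  map_comp _ _ := rfl

/-- The tautological cocone on the diagram of small subpresheaves. -/
def smallSubCocone (P : Cᵒᵖ ⥤ Type v) : Cocone (smallSubDiag (κ := κ) P) where
  pt := P
  ι := { app := fun S => S.1.ι, naturality := fun _ _ _ => rfl }

lemma smallSub_cardFiltered (hκ : κ.IsRegular) (P : Cᵒᵖ ⥤ Type v) :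
    IsCardFiltered κ (SmallSub κ P) := by
  intro K _ hK F
  have hKobj : #K < κ := (mk_obj_le_mk_hom K).trans_lt hK
  refine ⟨⟨⟨unionSub P (fun k => (F.obj k).1),
    fun c => unionSub_small hκ hKobj _ (fun k => (F.obj k).2) c⟩,
    { app := fun k => homOfLE
        (Subtype.coe_le_coe.mp (le_unionSub P (fun k => (F.obj k).1) k)),
      naturality := fun _ _ _ => Subsingleton.elim _ _ }⟩⟩

noncomputable def smallSubCoconeIsColimit (hκ : κ.IsRegular)
    (hC : #(Σ X Y : C, X ⟶ Y) < κ) (P : Cᵒᵖ ⥤ Type v) :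
    IsColimit (smallSubCocone (κ := κ) P) := by
  refine evaluationJointlyReflectsColimits _ (fun d => ?_)
  refine Types.FilteredColimit.isColimitOf _ _ ?_ ?_
  · intro x
    exact ⟨⟨genSub P d x, genSub_small hκ hC P d x⟩, ⟨x, genSub_self P d x⟩, rfl⟩
  · intro S T x y h
    refine ⟨⟨unionSub P (fun b : ULift.{v} Bool => if b.down then S.1 else T.1),
      fun c => unionSub_small hκ ((lt_aleph0_of_finite _).trans_le hκ.aleph0_le)
        _ (fun b c' => by
          rcases b with ⟨(_ | _)⟩ <;> first | exact S.2 c' | exact T.2 c') c⟩,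
      homOfLE (Subtype.coe_le_coe.mp (by
        exact le_unionSub P (fun b : ULift.{v} Bool => if b.down then S.1 else T.1)
          (ULift.up true))),
      homOfLE (Subtype.coe_le_coe.mp (by
        exact le_unionSub P (fun b : ULift.{v} Bool => if b.down then S.1 else T.1)
          (ULift.up false))), ?_⟩
    exact Subtype.ext h

lemma small_of_compact (hκ : κ.IsRegular) (hC : #(Σ X Y : C, X ⟶ Y) < κ)
    {P : Cᵒᵖ ⥤ Type v} (hP : IsKappaCompact κ P) (d : Cᵒᵖ) :
    #(P.obj d) < κ := by
  obtain ⟨hmap⟩ := hP (SmallSub κ P) (smallSub_cardFiltered hκ P)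
    (smallSubDiag P) (smallSubCocone P) ⟨smallSubCoconeIsColimit hκ hC P⟩
  obtain ⟨S, h, hh⟩ := Types.jointly_surjective _ hmap (𝟙 P)
  have hsurj : Function.Surjective (fun x : (S.1.obj d) => x.1) := by
    intro x
    refine ⟨h.app d x, ?_⟩
    exact types_congr_hom (congrArg (fun (η : P ⟶ P) => η.app d) hh) x
  exact (mk_le_of_surjective hsurj).trans_lt (S.2 d)

/-- `Hom(yoneda.obj c, −)` is naturally isomorphic to evaluation at `c`. -/
noncomputable def coyonedaYonedaIso (c : C) :
    (evaluation Cᵒᵖ (Type v)).obj (Opposite.op c) ≅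
      coyoneda.obj (Opposite.op (yoneda.obj c)) :=
  NatIso.ofComponents (fun P => (Equiv.toIso (yonedaEquiv (X := c) (F := P))).symm)
    (by
      intro P Q η
      ext x
      dsimp
      apply yonedaEquiv.injective
      rw [CategoryTheory.yonedaEquiv_comp]
      simp)

lemma yoneda_isKappaCompact (κ : Cardinal.{v}) (c : C) :
    IsKappaCompact κ (yoneda.obj c) := by
  intro J _ hJ F cone hcone
  obtain ⟨hc⟩ := hcone
  exact ⟨IsColimit.mapCoconeEquiv (coyonedaYonedaIso c)
    (isColimitOfPreserves ((evaluation Cᵒᵖ (Type v)).obj (Opposite.op c)) hc)⟩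

lemma compact_of_small (hκ : κ.IsRegular) (hC : #(Σ X Y : C, X ⟶ Y) < κ)
    {P : Cᵒᵖ ⥤ Type v} (hP : ∀ d : Cᵒᵖ, #(P.obj d) < κ) :
    IsKappaCompact κ P := by
  intro J _ hJ F cone hcone
  obtain ⟨hc⟩ := hcone
  haveI : IsFiltered J := isFiltered_of_cardFiltered hκ hJ
  have hEv : ∀ d : Cᵒᵖ, IsColimit (((evaluation Cᵒᵖ (Type v)).obj d).mapCocone cone) :=
    fun d => isColimitOfPreserves _ hc
  have hCop : #Cᵒᵖ < κ :=
    ((mk_congr Opposite.equivToOpposite).symm.trans_lt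
      ((mk_obj_le_mk_hom C).trans_lt hC))
  have hT₀ : #(Σ d : Cᵒᵖ, P.obj d) < κ := by
    rw [mk_sigma]
    exact sum_lt_of_isRegular hκ hCop (fun d => hP d)
  refine ⟨Types.FilteredColimit.isColimitOf _ _ ?_ ?_⟩
  · -- surjectivity: every map `P ⟶ cone.pt` factors through a stage
    intro η
    -- choose preimages of each element
    choose jj yy hyy using fun t : Σ d : Cᵒᵖ, P.obj d =>
      Types.jointly_surjective _ (hEv t.1) (η.app t.1 t.2)
    obtain ⟨j₀, he⟩ := exists_cocone_family hκ hJ hT₀ jj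
    have e : ∀ t, jj t ⟶ j₀ := fun t => (he t).some
    set yh : ∀ t : Σ d : Cᵒᵖ, P.obj d, (F.obj j₀).obj t.1 :=
      fun t => (F.map (e t)).app t.1 (yy t) with hyh
    have hyc : ∀ t : Σ d : Cᵒᵖ, P.obj d,
        (cone.ι.app j₀).app t.1 (yh t) = η.app t.1 t.2 := by
      intro t
      have hw := congrArg (fun (α : F.obj (jj t) ⟶ cone.pt) => α.app t.1 (yy t))
        (cone.w (e t))
      dsimp at hw
      rw [hyh]
      dsimp
      rw [← hyy t]
      exact hw
    -- the naturality conditions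
    set T₁ := Σ q : (Σ d d' : Cᵒᵖ, d ⟶ d'), P.obj q.1 with hT₁def
    have hT₁ : #T₁ < κ := by
      rw [hT₁def, mk_sigma]
      refine sum_lt_of_isRegular hκ ?_ (fun q => hP q.1)
      rw [mk_sigma]
      refine sum_lt_of_isRegular hκ hCop (fun d => ?_)
      rw [mk_sigma]
      exact sum_lt_of_isRegular hκ hCop (fun d' => mk_op_hom_lt hC d d')
    obtain ⟨k, w, hw⟩ := eq_stage_family hκ hJ hT₁ j₀
      (fun q => F ⋙ (evaluation Cᵒᵖ (Type v)).obj q.1.2.1)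
      (fun q => ((evaluation Cᵒᵖ (Type v)).obj q.1.2.1).mapCocone cone)
      (fun q => hEv q.1.2.1)
      (fun q => (F.obj j₀).map q.1.2.2 (yh ⟨q.1.1, q.2⟩))
      (fun q => yh ⟨q.1.2.1, P.map q.1.2.2 q.2⟩)
      (by
        rintro ⟨⟨d, d', f⟩, z⟩
        dsimp
        have h1 := types_congr_hom ((cone.ι.app j₀).naturality f) (yh ⟨d, z⟩)
        dsimp at h1
        rw [h1, hyc ⟨d, z⟩]
        have h2 := types_congr_hom (η.naturality f) z
        dsimp at h2
        rw [← h2]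
        exact (hyc ⟨d', P.map f z⟩).symm)
    refine ⟨k, { app := fun d => TypeCat.ofHom (fun z => (F.map w).app d (yh ⟨d, z⟩)), naturality := ?_ }, ?_⟩
    · intro d d' f
      ext z
      dsimp
      have h1 := types_congr_hom ((F.map w).naturality f) (yh ⟨d, z⟩)
      dsimp at h1
      rw [← h1]
      exact (hw ⟨⟨d, d', f⟩, z⟩).symm
    · -- η = η' ≫ cone.ι.app k
      apply NatTrans.ext
      funext d
      ext z
      dsimp
      have h1 := congrArg (fun (α : F.obj j₀ ⟶ cone.pt) => α.app d (yh ⟨d, z⟩))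
        (cone.w w)
      dsimp at h1
      rw [h1]
      exact (hyc ⟨d, z⟩).symm
  · -- injectivity
    intro i j η₁ η₂ hij
    obtain ⟨k₀, u₁, u₂, -⟩ := IsFilteredOrEmpty.cocone_objs i j
    have hθ : (η₁ ≫ F.map u₁) ≫ cone.ι.app k₀ = (η₂ ≫ F.map u₂) ≫ cone.ι.app k₀ := by
      rw [Category.assoc, Category.assoc, cone.w u₁, cone.w u₂]
      exact hij
    obtain ⟨k, w, hw⟩ := eq_stage_family hκ hJ hT₀ k₀
      (fun t => F ⋙ (evaluation Cᵒᵖ (Type v)).obj t.1)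
      (fun t => ((evaluation Cᵒᵖ (Type v)).obj t.1).mapCocone cone)
      (fun t => hEv t.1)
      (fun t => (η₁ ≫ F.map u₁).app t.1 t.2)
      (fun t => (η₂ ≫ F.map u₂).app t.1 t.2)
      (fun t => types_congr_hom (congrArg (fun (α : P ⟶ cone.pt) => α.app t.1) hθ) t.2)
    refine ⟨k, u₁ ≫ w, u₂ ≫ w, ?_⟩
    show η₁ ≫ F.map (u₁ ≫ w) = η₂ ≫ F.map (u₂ ≫ w)
    apply NatTrans.ext
    funext d
    ext z
    have := hw ⟨d, z⟩
    dsimp at this ⊢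
    rw [F.map_comp, F.map_comp]
    dsimp
    exact this

end Presheaf

end KappaAux

open Cardinal

/-- For a regular cardinal `κ` larger than the number of morphisms of a small
category `C`, a morphism of presheaves `f : P ⟶ Q` is relatively `κ`-compact iff its
pullbacks along maps from representable presheaves are `κ`-compact. -/
theorem presheaf_relKappaCompact_iff_representable_fibers
    {C : Type v} [SmallCategory C] (κ : Cardinal.{v}) (hκ : κ.IsRegular)
    (hC : Cardinal.mk (Σ X Y : C, X ⟶ Y) < κ)
    {P Q : Cᵒᵖ ⥤ Type v} (f : P ⟶ Q) :
    RelKappaCompact κ f ↔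
      ∀ (c : C) (g : yoneda.obj c ⟶ Q) (Pt : Cᵒᵖ ⥤ Type v)
        (fst : Pt ⟶ P) (snd : Pt ⟶ yoneda.obj c),
        IsPullback fst snd f g → IsKappaCompact κ Pt := by
  constructor
  · intro h c g Pt fst snd pb
    exact h (yoneda.obj c) g (KappaAux.yoneda_isKappaCompact κ c) Pt fst snd pb
  · intro H Z g hZ P' fst snd pb
    have hZsmall : ∀ d : Cᵒᵖ, #(Z.obj d) < κ := KappaAux.small_of_compact hκ hC hZ
    refine KappaAux.compact_of_small hκ hC (fun d => ?_)
    have key : ∀ z : Z.obj d, #{p : P.obj d // f.app d p = g.app d z} < κ := by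
      intro z
      set gz : yoneda.obj d.unop ⟶ Q := yonedaEquiv.symm (g.app d z) with hgz
      have hpb : IsPullback (pullback.fst f gz) (pullback.snd f gz) f gz :=
        IsPullback.of_hasPullback f gz
      have hPt : IsKappaCompact κ (Limits.pullback f gz) :=
        H d.unop gz (Limits.pullback f gz) (pullback.fst f gz) (pullback.snd f gz) hpb
      have hPtd : #((Limits.pullback f gz).obj d) < κ :=
        KappaAux.small_of_compact hκ hC hPt d
      refine lt_of_le_of_lt ?_ hPtd
      have w : ∀ p : {p : P.obj d // f.app d p = g.app d z},
          yonedaEquiv.symm p.1 ≫ f = 𝟙 (yoneda.obj d.unop) ≫ gz := by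
        intro p
        rw [Category.id_comp]
        apply yonedaEquiv.injective
        rw [CategoryTheory.yonedaEquiv_comp]
        simp [hgz, p.2]
      apply mk_le_of_injective
        (f := fun p => yonedaEquiv (pullback.lift (yonedaEquiv.symm p.1) (𝟙 _) (w p)))
      intro p p' hpp
      apply Subtype.ext
      have h1 := congrArg (fun x => (pullback.fst f gz).app d x) hpp
      dsimp at h1
      rw [← CategoryTheory.yonedaEquiv_comp, ← CategoryTheory.yonedaEquiv_comp,
        pullback.lift_fst, pullback.lift_fst] at h1
      simpa using h1
    have hcomm : ∀ x : P'.obj d, f.app d (fst.app d x) = g.app d (snd.app d x) :=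
      fun x => types_congr_hom (congrArg (fun (α : P' ⟶ Q) => α.app d) pb.w) x
    have hle : #(P'.obj d) ≤
        #(Σ z : Z.obj d, {p : P.obj d // f.app d p = g.app d z}) := by
      apply mk_le_of_injective
        (f := fun x => ⟨snd.app d x, fst.app d x, hcomm x⟩)
      intro x y hxy
      have h1 : snd.app d x = snd.app d y := congrArg Sigma.fst hxy
      have h2 : fst.app d x = fst.app d y :=
        congrArg (fun s : Σ z : Z.obj d, {p : P.obj d // f.app d p = g.app d z} =>
          (s.2 : P.obj d)) hxy
      have h3 : yonedaEquiv.symm x = yonedaEquiv.symm y := by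
        apply pb.hom_ext
        · apply yonedaEquiv.injective
          rw [CategoryTheory.yonedaEquiv_comp, CategoryTheory.yonedaEquiv_comp]
          simpa using h2
        · apply yonedaEquiv.injective
          rw [CategoryTheory.yonedaEquiv_comp, CategoryTheory.yonedaEquiv_comp]
          simpa using h1
      exact yonedaEquiv.symm.injective h3
    refine hle.trans_lt ?_
    rw [mk_sigma]
    exact sum_lt_of_isRegular hκ (hZsmall d) key
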